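/- Let H be a real Hilbert space and f : H → H a map which is monotone, i.e. ⟪f(x) − f(y), x − y⟫ ≤ 0 for all x, y ∈ H, and hemicontinuous, i.e. for all x, y ∈ H the map t ↦ f(x + t·y) from ℝ to H is continuous. Then f is maximal monotone in the following sense: whenever x₀ ∈ H and y₀ ∈ H satisfy ⟪y₀ − f(z), x₀ − z⟫ ≤ 0 for all z ∈ H, one has y₀ = f(x₀). -/

import Mathlib

open RealInnerProductSpace

/-- A monotone hemicontinuous operator on a Hilbert space is maximal monotone:
if `⟪y₀ - f z, x₀ - z⟫ ≤ 0` for all `z`, then `y₀ = f x₀`. -/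
theorem monotone_hemicontinuous_maximal
    {H : Type*} [NormedAddCommGroup H] [InnerProductSpace ℝ H]
    (f : H → H) (hf : ∀ x y : H, ⟪f x - f y, x - y⟫ ≤ 0)
    (hhemi : ∀ x y : H, Continuous fun t : ℝ => f (x + t • y)) :
    ∀ x₀ y₀ : H, (∀ z : H, ⟪y₀ - f z, x₀ - z⟫ ≤ 0) → y₀ = f x₀ := by
  intro x₀ y₀ h
  have key : ∀ w : H, ⟪y₀ - f x₀, w⟫ ≤ 0 := by
    intro w
    set g : ℝ → ℝ := fun t => ⟪y₀ - f (x₀ + t • (-w)), w⟫ with hg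
    have hgc : Continuous g := by
      exact Continuous.inner (continuous_const.sub (hhemi x₀ (-w))) continuous_const
    have hle : ∀ t ∈ Set.Ioi (0:ℝ), g t ≤ 0 := by
      intro t ht
      have := h (x₀ + t • (-w))
      have heq : x₀ - (x₀ + t • (-w)) = t • w := by
        rw [smul_neg]; abel
      rw [heq, real_inner_smul_right] at this
      show (inner ℝ (y₀ - f (x₀ + t • -w)) w : ℝ) ≤ 0
      nlinarith [Set.mem_Ioi.mp ht]
    have htend : Filter.Tendsto g (nhdsWithin 0 (Set.Ioi 0)) (nhds (g 0)) :=
      (hgc.tendsto 0).mono_left nhdsWithin_le_nhds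
    have h0 : g 0 ≤ 0 :=
      le_of_tendsto htend (Filter.eventually_iff_exists_mem.2
        ⟨Set.Ioi 0, self_mem_nhdsWithin, hle⟩)
    simpa [g] using h0
  have := key (y₀ - f x₀)
  rw [real_inner_self_nonpos] at this
  exact sub_eq_zero.mp this
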